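/- Let L/K be a cyclic Galois extension of degree n with Galois group generated by σ, let 1 ≤ k ≤ n, and let x₁, …, x_k ∈ L. Then x₁, …, x_k are linearly dependent over K if and only if det S = 0, where S is the k × k matrix over L whose (i,j)-entry is σ^{i−1}(x_j) for 1 ≤ i, j ≤ k. -/
import Mathlib

variable {K L : Type*} [Field K] [Field L] [Algebra K L]

lemma fixed_mem_range [FiniteDimensional K L] [IsGalois K L]
    (σ : L ≃ₐ[K] L) (hgen : ∀ τ : L ≃ₐ[K] L, τ ∈ Subgroup.zpowers σ)
    (c : L) (hc : σ c = c) : ∃ a : K, algebraMap K L a = c := by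
  have hnat : ∀ i : ℕ, (σ ^ i) c = c := by
    intro i
    induction i with
    | zero => simp
    | succ n ih => rw [pow_succ, AlgEquiv.mul_apply, hc, ih]
  have hall : ∀ τ : L ≃ₐ[K] L, τ c = c := by
    intro τ
    obtain ⟨z, rfl⟩ := hgen τ
    rcases z with n | n
    · show (σ ^ (n:ℤ)) c = c
      rw [zpow_natCast]; exact hnat n
    · show (σ ^ Int.negSucc n) c = c
      rw [zpow_negSucc]
      have h1 := hnat (n + 1)
      conv_lhs => rw [← h1]
      rw [← AlgEquiv.mul_apply, inv_mul_cancel]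
      simp
  have hbot : IntermediateField.fixedField (⊤ : Subgroup (L ≃ₐ[K] L)) = (⊥ : IntermediateField K L) :=
    ((IsGalois.tfae).out 0 1).mp (inferInstance : IsGalois K L)
  have hmem : c ∈ IntermediateField.fixedField (⊤ : Subgroup (L ≃ₐ[K] L)) := by
    intro g
    exact hall g
  rw [hbot, IntermediateField.mem_bot] at hmem
  exact hmem

lemma key_indep [FiniteDimensional K L] [IsGalois K L]
    (σ : L ≃ₐ[K] L) (hgen : ∀ τ : L ≃ₐ[K] L, τ ∈ Subgroup.zpowers σ) :
    ∀ k (x : Fin k → L), LinearIndependent K x →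
      ∀ v : Fin k → L, (∀ i : ℕ, i < k → ∑ j, (σ ^ i) (x j) * v j = 0) → v = 0 := by
  intro k
  induction k using Nat.strong_induction_on with
  | _ k IH =>
  intro x hx v hv
  by_contra hv0
  obtain ⟨j₀, hj₀⟩ : ∃ j, v j ≠ 0 := by
    by_contra h
    push_neg at h
    exact hv0 (funext fun j => h j)
  have hkpos : 0 < k := j₀.pos
  obtain ⟨m, rfl⟩ : ∃ m, k = m + 1 := ⟨k - 1, by omega⟩
  set w : Fin (m + 1) → L := fun j => v j * (v j₀)⁻¹ with hwdef
  have hw0 : w j₀ = 1 := mul_inv_cancel₀ hj₀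
  have hRw : ∀ i : ℕ, i < m + 1 → ∑ j, (σ ^ i) (x j) * w j = 0 := by
    intro i hi
    have h := hv i hi
    calc ∑ j, (σ ^ i) (x j) * w j = (∑ j, (σ ^ i) (x j) * v j) * (v j₀)⁻¹ := by
          rw [Finset.sum_mul]
          exact Finset.sum_congr rfl fun j _ => (mul_assoc _ _ _).symm
      _ = 0 := by rw [h, zero_mul]
  set e : Fin (m + 1) → L := fun j => σ.symm (σ (w j) - w j) with hedef
  have he0 : e j₀ = 0 := by simp [hedef, hw0]
  have hRe : ∀ i : ℕ, i < m → ∑ j, (σ ^ i) (x j) * e j = 0 := by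
    intro i hi
    have h1 : ∑ j, σ ((σ ^ i) (x j)) * σ (w j) = 0 := by
      have := congrArg σ (hRw i (by omega))
      simpa [map_sum] using this
    have h2 : ∑ j, (σ ^ (i + 1)) (x j) * w j = 0 := hRw (i + 1) (by omega)
    have h3 : ∑ j, σ ((σ ^ i) (x j)) * (σ (w j) - w j) = 0 := by
      have h2' : ∑ j, σ ((σ ^ i) (x j)) * w j = 0 := by
        have : ∀ j, (σ ^ (i + 1)) (x j) = σ ((σ ^ i) (x j)) := fun j => by
          rw [pow_succ', AlgEquiv.mul_apply]
        simpa [this] using h2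
      simp only [mul_sub, Finset.sum_sub_distrib, h1, h2', sub_zero]
    have := congrArg σ.symm h3
    simpa [map_sum, hedef] using this
  -- apply IH with indices ≠ j₀
  have hxm : LinearIndependent K (x ∘ j₀.succAbove) :=
    hx.comp _ (Fin.succAbove_right_injective)
  have hem : (e ∘ j₀.succAbove) = 0 := by
    refine IH m m.lt_succ_self _ hxm _ ?_
    intro i hi
    have h := hRe i hi
    rw [Fin.sum_univ_succAbove _ j₀, he0, mul_zero, zero_add] at h
    exact h
  have he : ∀ j, e j = 0 := by
    intro j
    rcases eq_or_ne j j₀ with rfl | hne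
    · exact he0
    · obtain ⟨j', rfl⟩ := Fin.exists_succAbove_eq hne
      exact congrFun hem j'
  have hfix : ∀ j, σ (w j) = w j := by
    intro j
    have h1 : σ.symm (σ (w j) - w j) = 0 := he j
    have h2 : σ (w j) - w j = 0 := by
      have := congrArg σ h1
      simpa using this
    exact sub_eq_zero.mp h2
  have hc : ∀ j, ∃ a : K, algebraMap K L a = w j := fun j =>
    fixed_mem_range σ hgen _ (hfix j)
  choose c hcw using hc
  have hsum : ∑ j, c j • x j = 0 := by
    have h0 := hRw 0 (by omega)
    simp only [pow_zero, AlgEquiv.one_apply] at h0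
    rw [← h0]
    refine Finset.sum_congr rfl fun j _ => ?_
    rw [Algebra.smul_def, hcw, mul_comm]
  have hcz := Fintype.linearIndependent_iff.mp hx c hsum j₀
  have h1 : algebraMap K L (c j₀) = 1 := by rw [hcw j₀, hw0]
  rw [hcz, map_zero] at h1
  exact zero_ne_one h1

theorem statement12 [FiniteDimensional K L] [IsGalois K L]
    (n : ℕ) (hn : Module.finrank K L = n)
    (σ : L ≃ₐ[K] L) (hgen : ∀ τ : L ≃ₐ[K] L, τ ∈ Subgroup.zpowers σ)
    (k : ℕ) (hk1 : 1 ≤ k) (hkn : k ≤ n) (x : Fin k → L) :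
    ¬ LinearIndependent K x ↔
      (Matrix.of fun i j : Fin k => (σ ^ (i : ℕ)) (x j)).det = 0 := by
  constructor
  · intro hdep
    rw [Fintype.not_linearIndependent_iff] at hdep
    obtain ⟨g, hg, j₁, hj₁⟩ := hdep
    rw [← Matrix.exists_mulVec_eq_zero_iff]
    refine ⟨fun j => algebraMap K L (g j), ?_, ?_⟩
    · intro h
      apply hj₁
      have h2 : algebraMap K L (g j₁) = 0 := congrFun h j₁
      exact (map_eq_zero_iff _ (algebraMap K L).injective).mp h2
    · funext i
      simp only [Matrix.mulVec, dotProduct, Matrix.of_apply, Pi.zero_apply]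
      have : ∀ j, (σ ^ (i : ℕ)) (x j) * algebraMap K L (g j)
          = (σ ^ (i : ℕ)) (g j • x j) := by
        intro j
        rw [map_smul, Algebra.smul_def, mul_comm]
      rw [Finset.sum_congr rfl fun j _ => this j, ← map_sum, hg, map_zero]
  · intro hdet hli
    obtain ⟨v, hv0, hv⟩ := Matrix.exists_mulVec_eq_zero_iff.mpr hdet
    apply hv0
    refine key_indep σ hgen k x hli v ?_
    intro i hi
    have := congrFun hv ⟨i, hi⟩
    simpa [Matrix.mulVec, dotProduct] using this
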